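/- Let c be a positive integer and let G be a simple graph on n vertices with vertices s and t such that the graph distance satisfies d(s,t) = n − c. Then the number of distinct s–t shortest paths in G is at most c^c. -/

import Mathlib

open SimpleGraph

private lemma walk_ext {V : Type*} {G : SimpleGraph V} :
    ∀ {u v : V} (p q : G.Walk u v), p.length = q.length →
      (∀ i, p.getVert i = q.getVert i) → p = q
  | _, _, .nil, .nil, _, _ => rfl
  | _, _, .nil, .cons _ _, hl, _ => by simp at hl
  | _, _, .cons _ _, .nil, hl, _ => by simp at hl
  | u, v, .cons h p, .cons h' q, hl, hv => by
    have h1 : p.getVert 0 = q.getVert 0 := hv 1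
    rw [SimpleGraph.Walk.getVert_zero, SimpleGraph.Walk.getVert_zero] at h1
    subst h1
    have := walk_ext p q (by simpa using hl) (fun i => hv (i + 1))
    subst this
    rfl

private lemma walk_split {V : Type*} {G : SimpleGraph V} :
    ∀ {u v : V} (p : G.Walk u v) (i : ℕ), i ≤ p.length →
      ∃ (q : G.Walk u (p.getVert i)) (r : G.Walk (p.getVert i) v),
        q.length = i ∧ r.length = p.length - i
  | _, _, .nil, i, hi => by
    simp only [Walk.length_nil, Nat.le_zero] at hi
    subst hi
    exact ⟨.nil, .nil, rfl, rfl⟩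
  | u, v, .cons h p, 0, _ => ⟨.nil, .cons h p, rfl, rfl⟩
  | u, v, .cons h p, (i+1), hi => by
    obtain ⟨q, r, hq, hr⟩ := walk_split p i (by simpa using hi)
    exact ⟨.cons h q, r, by simp [hq], by simpa using hr⟩

theorem card_shortestPaths_le_of_long_dist {V : Type*} [Fintype V]
    (G : SimpleGraph V) (s t : V) (n c : ℕ) (hc : 1 ≤ c)
    (hn : Fintype.card V = n) (hd : G.dist s t = n - c) (hcn : c ≤ n) :
    Nat.card {p : G.Walk s t // p.length = G.dist s t} ≤ c ^ c := by
  classical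
  have hcc : 1 ≤ c ^ c := Nat.one_le_pow _ _ hc
  by_cases hreach : G.Reachable s t
  swap
  · have : IsEmpty {p : G.Walk s t // p.length = G.dist s t} :=
      ⟨fun ⟨p, _⟩ => hreach ⟨p⟩⟩
    simpa [Nat.card_of_isEmpty] using hcc
  set d := G.dist s t with hdd
  -- layers
  set A : ℕ → Finset V := fun i =>
    Finset.univ.filter (fun v => G.dist s v = i ∧ G.dist v t = d - i) with hA
  -- getVert of a shortest walk lies in the layer
  have hmem : ∀ (p : G.Walk s t), p.length = d → ∀ i ≤ d, p.getVert i ∈ A i := by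
    intro p hp i hi
    obtain ⟨q, r, hq, hr⟩ := walk_split p i (by rw [hp]; exact hi)
    have hsv : G.dist s (p.getVert i) ≤ i := le_trans (G.dist_le q) hq.le
    have hvt : G.dist (p.getVert i) t ≤ d - i := by
      rw [← hp, ← hr]; exact G.dist_le r
    obtain ⟨w1, hw1⟩ := q.reachable.exists_walk_length_eq_dist
    obtain ⟨w2, hw2⟩ := r.reachable.exists_walk_length_eq_dist
    have h1 : d ≤ G.dist s (p.getVert i) + (p.length - i) := by
      have := G.dist_le (w1.append r)
      rwa [Walk.length_append, hw1, hr] at this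
    have h2 : d ≤ i + G.dist (p.getVert i) t := by
      have := G.dist_le (q.append w2)
      rwa [Walk.length_append, hw2, hq] at this
    rw [hp] at h1
    simp only [hA, Finset.mem_filter, Finset.mem_univ, true_and]
    omega
  -- injective map into the product of layers
  obtain ⟨p₀, hp₀⟩ := hreach.exists_walk_length_eq_dist
  have hne : ∀ i, i ≤ d → (A i).Nonempty := fun i hi => ⟨p₀.getVert i, hmem p₀ hp₀ i hi⟩
  have Φinj : Function.Injective
      (fun (p : {p : G.Walk s t // p.length = d}) (i : Fin (d + 1)) =>
        (⟨p.1.getVert i, hmem p.1 p.2 i (Nat.lt_succ_iff.mp i.2)⟩ : {x // x ∈ A (i : ℕ)})) := by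
    intro p q hpq
    ext1
    apply walk_ext _ _ (p.2.trans q.2.symm)
    intro i
    rcases le_or_gt i d with hi | hi
    · have := congrFun hpq ⟨i, Nat.lt_succ_of_le hi⟩
      exact congrArg Subtype.val this
    · rw [Walk.getVert_of_length_le _ (p.2.le.trans hi.le),
        Walk.getVert_of_length_le _ (q.2.le.trans hi.le)]
  have hcard : Nat.card {p : G.Walk s t // p.length = d} ≤
      ∏ i : Fin (d + 1), (A (i : ℕ)).card := by
    have := Nat.card_le_card_of_injective _ Φinj
    rw [Nat.card_pi] at this
    simpa only [Nat.card_eq_finsetCard] using this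
  refine le_trans hcard ?_
  -- layers are pairwise disjoint
  have hdisj : ∀ i j : Fin (d + 1), i ≠ j → Disjoint (A (i : ℕ)) (A (j : ℕ)) := by
    intro i j hij
    rw [Finset.disjoint_left]
    intro v hvi hvj
    simp only [hA, Finset.mem_filter, Finset.mem_univ, true_and] at hvi hvj
    exact hij (Fin.ext (hvi.1 ▸ hvj.1))
  have hsum : ∑ i : Fin (d + 1), (A (i : ℕ)).card ≤ n := by
    rw [← Finset.card_biUnion (fun i _ j _ hij => hdisj i j hij)]
    rw [← hn]
    exact Finset.card_le_univ _
  have hpos : ∀ i : Fin (d + 1), 1 ≤ (A (i : ℕ)).card := fun i =>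
    Finset.card_pos.mpr (hne i (Nat.lt_succ_iff.mp i.2))
  have hsum1 : ∑ i : Fin (d + 1), ((A (i : ℕ)).card - 1) + (d + 1)
      = ∑ i : Fin (d + 1), (A (i : ℕ)).card := by
    calc ∑ i : Fin (d + 1), ((A (i : ℕ)).card - 1) + (d + 1)
        = ∑ i : Fin (d + 1), ((A (i : ℕ)).card - 1) + ∑ _i : Fin (d + 1), 1 := by simp
      _ = ∑ i : Fin (d + 1), (((A (i : ℕ)).card - 1) + 1) := Finset.sum_add_distrib.symm
      _ = ∑ i : Fin (d + 1), (A (i : ℕ)).card :=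
          Finset.sum_congr rfl fun i _ => Nat.sub_add_cancel (hpos i)
  have hsumle : ∑ i : Fin (d + 1), ((A (i : ℕ)).card - 1) ≤ c - 1 := by omega
  calc ∏ i : Fin (d + 1), (A (i : ℕ)).card
      ≤ ∏ i : Fin (d + 1), 2 ^ ((A (i : ℕ)).card - 1) := by
        refine Finset.prod_le_prod' fun i _ => ?_
        have := Nat.lt_two_pow_self (n := (A (i : ℕ)).card - 1)
        omega
    _ = 2 ^ (∑ i : Fin (d + 1), ((A (i : ℕ)).card - 1)) := Finset.prod_pow_eq_pow_sum _ _ _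
    _ ≤ 2 ^ (c - 1) := Nat.pow_le_pow_right (by norm_num) hsumle
    _ ≤ c ^ c := by
        rcases Nat.lt_or_ge c 2 with h2 | h2
        · interval_cases c <;> simp
        · calc 2 ^ (c - 1) ≤ c ^ (c - 1) := Nat.pow_le_pow_left h2 _
            _ ≤ c ^ c := Nat.pow_le_pow_right hc (Nat.sub_le c 1)
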